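/- Let g be a natural number with g ≥ 1 and q > 0 a real number. Let δ_1, …, δ_g be nonnegative reals and ℓ_1, …, ℓ_g positive reals. Define b_0 = 0 and b_k = b_{k−1} + (q/g)·δ_k for 1 ≤ k ≤ g, and assume b_g ≤ 1. Define Y : ℝ → ℝ by Y(x) = g/(q·ℓ_k) if x ∈ (b_{k−1}, b_k] for some 1 ≤ k ≤ g, and Y(x) = 1/(2q) otherwise. Define T : ℝ → ℝ by T(z) = g/⌈g/z⌉ if z ≥ 1 and T(z) = 0 if z < 1, where ⌈·⌉ denotes the ceiling. If Σ_{k : ℓ_k ≤ g} δ_k/⌈ℓ_k⌉ ≤ 1, then for X uniformly distributed on (0,1], the expectation satisfies E[T(q·Y(X))] ≤ q. -/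

import Mathlib

open MeasureTheory Finset

theorem stmt_10 (g : ℕ) (hg : 1 ≤ g) (q : ℝ) (hq : 0 < q)
    (δ ℓ : ℕ → ℝ)
    (hδ : ∀ k ∈ Finset.Icc 1 g, 0 ≤ δ k)
    (hℓ : ∀ k ∈ Finset.Icc 1 g, 0 < ℓ k)
    (b : ℕ → ℝ) (hb0 : b 0 = 0)
    (hb : ∀ k ∈ Finset.Icc 1 g, b k = b (k - 1) + (q / g) * δ k)
    (hbg : b g ≤ 1)
    (Y : ℝ → ℝ)
    (hY1 : ∀ k ∈ Finset.Icc 1 g, ∀ x ∈ Set.Ioc (b (k - 1)) (b k), Y x = g / (q * ℓ k))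
    (hY2 : ∀ x : ℝ, (∀ k ∈ Finset.Icc 1 g, x ∉ Set.Ioc (b (k - 1)) (b k)) →
      Y x = 1 / (2 * q))
    (T : ℝ → ℝ)
    (hT : ∀ z : ℝ, T z = if 1 ≤ z then (g : ℝ) / ((⌈(g : ℝ) / z⌉ : ℤ) : ℝ) else 0)
    (hsum : ∑ k ∈ (Finset.Icc 1 g).filter (fun k => ℓ k ≤ (g : ℝ)),
        δ k / ((⌈ℓ k⌉ : ℤ) : ℝ) ≤ 1) :
    ∫ x in Set.Ioc (0 : ℝ) 1, T (q * Y x) ≤ q := by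
  have hg0 : (0:ℝ) < g := by exact_mod_cast hg
  have hgne : (g:ℝ) ≠ 0 := ne_of_gt hg0
  -- step monotonicity
  have hstep : ∀ k ∈ Finset.Icc 1 g, b (k-1) ≤ b k := by
    intro k hk
    rw [hb k hk]
    have h1 : 0 ≤ δ k := hδ k hk
    have h2 : 0 ≤ (q / g) * δ k := by positivity
    linarith
  have hmono : ∀ j k : ℕ, j ≤ k → k ≤ g → b j ≤ b k := by
    intro j k hjk hkg
    induction k with
    | zero =>
      obtain rfl : j = 0 := Nat.le_zero.mp hjk
      exact le_refl _
    | succ n ih =>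
      rcases Nat.eq_or_lt_of_le hjk with rfl | h
      · exact le_refl _
      · have h1 : j ≤ n := Nat.lt_succ_iff.mp h
        have h2 : b j ≤ b n := ih h1 (le_trans (Nat.le_succ n) hkg)
        have h3 := hstep (n+1) (Finset.mem_Icc.mpr ⟨Nat.succ_le_succ (Nat.zero_le n), hkg⟩)
        simp only [Nat.add_sub_cancel] at h3
        linarith
  -- constants
  set c : ℕ → ℝ := fun k => if ℓ k ≤ (g:ℝ) then (g:ℝ) / ((⌈ℓ k⌉ : ℤ) : ℝ) else 0 with hc
  have hceil : ∀ k ∈ Finset.Icc 1 g, (0:ℝ) < ((⌈ℓ k⌉ : ℤ) : ℝ) := by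
    intro k hk
    have : (0:ℤ) < ⌈ℓ k⌉ := Int.ceil_pos.mpr (hℓ k hk)
    exact_mod_cast this
  have hTc : ∀ k ∈ Finset.Icc 1 g, T ((g:ℝ) / ℓ k) = c k := by
    intro k hk
    have hl := hℓ k hk
    rw [hT]
    by_cases h : ℓ k ≤ (g:ℝ)
    · have h1 : (1:ℝ) ≤ (g:ℝ) / ℓ k := (one_le_div hl).mpr h
      have h2 : (g:ℝ) / ((g:ℝ) / ℓ k) = ℓ k := by
        field_simp
      rw [if_pos h1, h2, hc]
      simp [h]
    · have h1 : (g:ℝ) / ℓ k < 1 := (div_lt_one hl).mpr (lt_of_not_ge h)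
      rw [if_neg (not_le.mpr h1), hc]
      simp [h]
  -- pointwise equality on (0,1]
  have hpt : ∀ x ∈ Set.Ioc (0:ℝ) 1, T (q * Y x) =
      ∑ k ∈ Finset.Icc 1 g, (Set.Ioc (b (k-1)) (b k)).indicator (fun _ => c k) x := by
    intro x hx
    by_cases h : ∃ k ∈ Finset.Icc 1 g, x ∈ Set.Ioc (b (k-1)) (b k)
    · obtain ⟨k, hk, hxk⟩ := h
      obtain ⟨hk1, hkg⟩ := Finset.mem_Icc.mp hk
      have hYx : Y x = g / (q * ℓ k) := hY1 k hk x hxk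
      have hl := hℓ k hk
      have hql : q * ℓ k ≠ 0 := ne_of_gt (mul_pos hq hl)
      have hqY : q * Y x = (g:ℝ) / ℓ k := by
        rw [hYx]; field_simp
      rw [hqY, hTc k hk]
      rw [Finset.sum_eq_single_of_mem k hk]
      · rw [Set.indicator_of_mem hxk]
      · intro j hj hjk
        obtain ⟨hj1, hjg⟩ := Finset.mem_Icc.mp hj
        apply Set.indicator_of_notMem
        rcases lt_or_gt_of_ne hjk with hlt | hgt
        · intro hxj
          have : b j ≤ b (k-1) := hmono j (k-1) (by omega) (by omega)
          have := hxk.1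
          have := hxj.2
          linarith
        · intro hxj
          have : b k ≤ b (j-1) := hmono k (j-1) (by omega) (by omega)
          have := hxj.1
          have := hxk.2
          linarith
    · push_neg at h
      have hYx : Y x = 1 / (2 * q) := hY2 x h
      have hqY : q * Y x = 1/2 := by rw [hYx]; field_simp
      rw [hqY, hT]
      rw [if_neg (by norm_num)]
      symm
      apply Finset.sum_eq_zero
      intro k hk
      exact Set.indicator_of_notMem (h k hk) _
  -- subset
  have hsub : ∀ k ∈ Finset.Icc 1 g, Set.Ioc (b (k-1)) (b k) ⊆ Set.Ioc (0:ℝ) 1 := by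
    intro k hk
    obtain ⟨hk1, hkg⟩ := Finset.mem_Icc.mp hk
    intro x hx
    constructor
    · have : b 0 ≤ b (k-1) := hmono 0 (k-1) (Nat.zero_le _) (by omega)
      rw [hb0] at this
      linarith [hx.1]
    · have : b k ≤ b g := hmono k g hkg le_rfl
      linarith [hx.2]
  -- integrability of each indicator
  have hint : ∀ k ∈ Finset.Icc 1 g,
      IntegrableOn ((Set.Ioc (b (k-1)) (b k)).indicator (fun _ => c k)) (Set.Ioc (0:ℝ) 1) := by
    intro k hk
    apply Integrable.indicator _ measurableSet_Ioc
    apply (integrableOn_const_iff (C := c k)).mpr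
    right
    rw [Real.volume_Ioc]
    exact ENNReal.ofReal_lt_top
  -- compute integral
  have heq : ∫ x in Set.Ioc (0:ℝ) 1, T (q * Y x)
      = ∑ k ∈ Finset.Icc 1 g, c k * (b k - b (k-1)) := by
    rw [setIntegral_congr_fun measurableSet_Ioc hpt]
    rw [integral_finset_sum _ hint]
    apply Finset.sum_congr rfl
    intro k hk
    rw [setIntegral_indicator measurableSet_Ioc]
    rw [Set.inter_eq_right.mpr (hsub k hk)]
    rw [setIntegral_const, measureReal_def, Real.volume_Ioc, smul_eq_mul]
    have : b (k-1) ≤ b k := hstep k hk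
    rw [ENNReal.toReal_ofReal (by linarith)]
    ring
  rw [heq]
  -- compare sum with q * hsum
  have hfin : ∑ k ∈ Finset.Icc 1 g, c k * (b k - b (k-1))
      = q * ∑ k ∈ (Finset.Icc 1 g).filter (fun k => ℓ k ≤ (g:ℝ)),
        δ k / ((⌈ℓ k⌉ : ℤ) : ℝ) := by
    rw [Finset.mul_sum, Finset.sum_filter]
    apply Finset.sum_congr rfl
    intro k hk
    have hdiff : b k - b (k-1) = (q / g) * δ k := by
      rw [hb k hk]; ring
    rw [hdiff]
    by_cases h : ℓ k ≤ (g:ℝ)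
    · have hcl := hceil k hk
      simp only [hc, if_pos h]
      field_simp
    · simp only [hc, if_neg h, zero_mul]
  rw [hfin]
  calc q * ∑ k ∈ (Finset.Icc 1 g).filter (fun k => ℓ k ≤ (g:ℝ)),
        δ k / ((⌈ℓ k⌉ : ℤ) : ℝ) ≤ q * 1 := by
        exact mul_le_mul_of_nonneg_left hsum hq.le
    _ = q := mul_one q
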